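/- Let A ∈ ℂ^{n×n}, B ∈ ℂ^{n×m}, C ∈ ℂ^{p×n}. Let V ∈ ℂ^{n×q} satisfy VᴴV = I_q, let K, H ∈ ℂ^{q×s} satisfy AᴴVK = VH, and let C̃ ∈ ℂ^{q×p} satisfy Cᴴ = VC̃. Let L ∈ ℂ^{q×s} be such that LᴴK is invertible, and set π := K(LᴴK)⁻¹Lᴴ, π̃ := I − π. Let Y ∈ ℂ^{s×s} be Hermitian, set X := V K Y Kᴴ Vᴴ, S := Kᴴ Vᴴ B Bᴴ V K, and suppose π (H Y Kᴴ + K Y Hᴴ + C̃C̃ᴴ − K Y S Y Kᴴ) πᴴ = 0. Then, with Υ := K Y Hᴴ + (I − (1/2)π̃) C̃C̃ᴴ, the Frobenius norms satisfy ‖R(X)‖_F = ‖π̃ Υᴴ + Υ π̃ᴴ‖_F. -/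

import Mathlib

open Matrix

/-- The Riccati residual `R(X) = AᴴX + XA + CᴴC − XBBᴴX`. -/
noncomputable def riccatiResidual {n m p : ℕ} (A : Matrix (Fin n) (Fin n) ℂ)
    (B : Matrix (Fin n) (Fin m) ℂ) (C : Matrix (Fin p) (Fin n) ℂ)
    (X : Matrix (Fin n) (Fin n) ℂ) : Matrix (Fin n) (Fin n) ℂ :=
  Aᴴ * X + X * A + Cᴴ * C - X * B * Bᴴ * X

/-- The Frobenius norm of a complex matrix. -/
noncomputable def frobNorm {a b : ℕ} (M : Matrix (Fin a) (Fin b) ℂ) : ℝ :=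
  Real.sqrt (∑ i, ∑ j, ‖M i j‖ ^ 2)

lemma frob_trace {a b : ℕ} (N : Matrix (Fin a) (Fin b) ℂ) :
    frobNorm N = Real.sqrt ((Matrix.trace (N * Nᴴ)).re) := by
  unfold frobNorm
  congr 1
  simp [Matrix.trace, Matrix.mul_apply, Matrix.conjTranspose_apply, Matrix.diag,
    Complex.re_sum, Complex.mul_conj, Complex.normSq_eq_norm_sq,
    ← Complex.ofReal_pow]

lemma frob_conj {n q : ℕ} (V : Matrix (Fin n) (Fin q) ℂ) (hV : Vᴴ * V = 1)
    (M : Matrix (Fin q) (Fin q) ℂ) : frobNorm (V * M * Vᴴ) = frobNorm M := by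
  rw [frob_trace, frob_trace]
  congr 2
  have : (V * M * Vᴴ) * (V * M * Vᴴ)ᴴ = V * (M * Mᴴ) * Vᴴ := by
    simp only [Matrix.conjTranspose_mul, Matrix.conjTranspose_conjTranspose]
    calc V * M * Vᴴ * (V * (Mᴴ * Vᴴ)) = V * M * (Vᴴ * V) * (Mᴴ * Vᴴ) := by
          simp only [Matrix.mul_assoc]
      _ = V * (M * Mᴴ) * Vᴴ := by rw [hV]; simp only [Matrix.mul_one, Matrix.mul_assoc]
  rw [this, Matrix.trace_mul_comm, ← Matrix.mul_assoc, hV, Matrix.one_mul]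

/-- `‖R(X)‖_F = ‖π̃ Υᴴ + Υ π̃ᴴ‖_F` when `Y` solves the
projected equation. -/
theorem stmt_6 {n m p q s : ℕ}
    (A : Matrix (Fin n) (Fin n) ℂ) (B : Matrix (Fin n) (Fin m) ℂ)
    (C : Matrix (Fin p) (Fin n) ℂ)
    (V : Matrix (Fin n) (Fin q) ℂ) (hV : Vᴴ * V = 1)
    (K H : Matrix (Fin q) (Fin s) ℂ) (hKH : Aᴴ * V * K = V * H)
    (Ct : Matrix (Fin q) (Fin p) ℂ) (hCt : Cᴴ = V * Ct)
    (L : Matrix (Fin q) (Fin s) ℂ) (hLK : IsUnit (Lᴴ * K))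
    (pr : Matrix (Fin q) (Fin q) ℂ) (hpr : pr = K * (Lᴴ * K)⁻¹ * Lᴴ)
    (pt : Matrix (Fin q) (Fin q) ℂ) (hpt : pt = 1 - pr)
    (Y : Matrix (Fin s) (Fin s) ℂ) (hY : Yᴴ = Y)
    (X : Matrix (Fin n) (Fin n) ℂ) (hX : X = V * K * Y * Kᴴ * Vᴴ)
    (S : Matrix (Fin s) (Fin s) ℂ) (hS : S = Kᴴ * Vᴴ * B * Bᴴ * V * K)
    (hproj : pr * (H * Y * Kᴴ + K * Y * Hᴴ + Ct * Ctᴴ - K * Y * S * Y * Kᴴ)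
        * prᴴ = 0)
    (Ups : Matrix (Fin q) (Fin q) ℂ)
    (hUps : Ups = K * Y * Hᴴ + (1 - (1/2 : ℂ) • pt) * (Ct * Ctᴴ)) :
    frobNorm (riccatiResidual A B C X) = frobNorm (pt * Upsᴴ + Ups * ptᴴ) := by
  set M : Matrix (Fin q) (Fin q) ℂ :=
    H * Y * Kᴴ + K * Y * Hᴴ + Ct * Ctᴴ - K * Y * S * Y * Kᴴ with hM
  -- basic facts
  have hC : C = Ctᴴ * Vᴴ := by
    have := congrArg conjTranspose hCt
    simpa using this
  have hdet : IsUnit (Lᴴ * K).det := (Matrix.isUnit_iff_isUnit_det _).mp hLK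
  have hptK : pt * K = 0 := by
    rw [hpt, hpr, Matrix.sub_mul, Matrix.one_mul, Matrix.mul_assoc (K * (Lᴴ * K)⁻¹),
      Matrix.mul_assoc K, Matrix.nonsing_inv_mul _ hdet, Matrix.mul_one, sub_self]
  have hKpt : Kᴴ * ptᴴ = 0 := by
    have := congrArg conjTranspose hptK
    simpa [Matrix.conjTranspose_mul] using this
  have hptK' : ∀ W : Matrix (Fin s) (Fin q) ℂ, pt * (K * W) = 0 := fun W => by
    rw [← Matrix.mul_assoc, hptK, Matrix.zero_mul]
  -- rewrite hKH in right-assoc-friendly forms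
  have hKH1 : ∀ W : Matrix (Fin s) (Fin n) ℂ, Aᴴ * (V * (K * W)) = V * (H * W) := fun W => by
    rw [← Matrix.mul_assoc, ← Matrix.mul_assoc, hKH, Matrix.mul_assoc]
  have hKH2 : Kᴴ * (Vᴴ * A) = Hᴴ * Vᴴ := by
    have := congrArg conjTranspose hKH
    simpa [Matrix.conjTranspose_mul, Matrix.mul_assoc] using this
  have hKH2' : ∀ W : Matrix (Fin n) (Fin n) ℂ, Kᴴ * (Vᴴ * (A * W)) = Hᴴ * (Vᴴ * W) := fun W => by
    rw [show Kᴴ * (Vᴴ * (A * W)) = Kᴴ * (Vᴴ * A) * W by simp [Matrix.mul_assoc],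
      hKH2, Matrix.mul_assoc]
  -- step A: residual = V * M * Vᴴ
  have hResid : riccatiResidual A B C X = V * M * Vᴴ := by
    rw [riccatiResidual, hX, hM, hS]
    nth_rewrite 2 [hC]
    rw [hCt]
    simp only [Matrix.mul_assoc, Matrix.mul_add, Matrix.add_mul, Matrix.mul_sub,
      Matrix.sub_mul, hKH1, hKH2]
  -- step B: M = pt * Upsᴴ + Ups * ptᴴ
  have hpr' : pr = 1 - pt := by rw [hpt]; abel
  have hstar : (starRingEnd ℂ) (1/2 : ℂ) = 1/2 := by
    rw [map_div₀, _root_.map_one, Complex.conj_ofNat]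
  have hB1 : M = pt * M + M * ptᴴ - pt * M * ptᴴ := by
    have h0 : M - (pt * M + M * ptᴴ - pt * M * ptᴴ) = (1 - pt) * M * (1 - ptᴴ) := by
      noncomm_ring
    have h1 : (1 - pt) * M * (1 - ptᴴ) = 0 := by
      rw [← hproj, hpr', Matrix.conjTranspose_sub, Matrix.conjTranspose_one]
    exact (sub_eq_zero.mp (h0.trans h1))
  have hMeq : M = pt * Upsᴴ + Ups * ptᴴ := by
    rw [hB1, hM, hUps]
    simp only [Matrix.conjTranspose_add, Matrix.conjTranspose_mul, Matrix.conjTranspose_sub,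
      Matrix.conjTranspose_smul, Matrix.conjTranspose_one, Matrix.conjTranspose_conjTranspose,
      hY, hstar, Matrix.mul_add, Matrix.add_mul, Matrix.mul_sub, Matrix.sub_mul,
      smul_mul_assoc, mul_smul_comm, Matrix.mul_assoc, hptK', hKpt,
      Matrix.mul_zero, Matrix.zero_mul, mul_zero, zero_mul, add_zero, zero_add, sub_zero,
      Matrix.one_mul, Matrix.mul_one, smul_zero]
    rw [show star (1/2 : ℂ) = 1/2 from hstar]
    module
  rw [hResid, hMeq]
  exact frob_conj V hV _
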